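/- For λ, μ ∈ ℂ* and α, β ∈ ℂ, the Neveu-Schwarz modules Ω_NS(λ, α) and Ω_NS(μ, β) are isomorphic as NS-modules if and only if λ = μ and α = β. -/

import Mathlib

open Polynomial

/-- `L_m` on the even part `ℂ[x]` of `Ω_NS(λ,α)`: `f ↦ λ^m (x + mα) f(x+m)`. -/
noncomputable def l0 (l a : ℂ) (m : ℤ) (f : Polynomial ℂ) : Polynomial ℂ :=
  l ^ m • ((X + C ((m : ℂ) * a)) * f.comp (X + C (m : ℂ)))

/-- `L_m` on the odd part `ℂ[y]`: `g ↦ λ^m (y + m(α+1/2)) g(y+m)`. -/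
noncomputable def nl1 (l a : ℂ) (m : ℤ) (g : Polynomial ℂ) : Polynomial ℂ :=
  l ^ m • ((X + C ((m : ℂ) * (a + 1/2))) * g.comp (X + C (m : ℂ)))

/-- `G_r` (with `r = k + 1/2`, `k ∈ ℤ`) from the even to the odd part:
`f(x) ↦ λ^{r−1/2} f(y+r)`. -/
noncomputable def ng01 (l : ℂ) (k : ℤ) (f : Polynomial ℂ) : Polynomial ℂ :=
  l ^ k • f.comp (X + C ((k : ℂ) + 1/2))

/-- `G_r` (with `r = k + 1/2`) from the odd to the even part:
`g(y) ↦ λ^{r+1/2} (x + 2rα) g(x+r)`. -/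
noncomputable def ng10 (l a : ℂ) (k : ℤ) (g : Polynomial ℂ) : Polynomial ℂ :=
  l ^ (k + 1) • ((X + C (2 * ((k : ℂ) + 1/2) * a)) * g.comp (X + C ((k : ℂ) + 1/2)))

/-- An isomorphism of `NS`-modules `Ω_NS(λ,α) → Ω_NS(μ,β)`: a pair of linear equivalences
of the even and odd parts intertwining the actions of all `L_m` and `G_r`. -/
def NSModIso (l a mu b : ℂ) : Prop :=
  ∃ (e0 e1 : Polynomial ℂ ≃ₗ[ℂ] Polynomial ℂ), ∀ (m k : ℤ) (f g : Polynomial ℂ),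
    e0 (l0 l a m f) = l0 mu b m (e0 f)
    ∧ e1 (nl1 l a m g) = nl1 mu b m (e1 g)
    ∧ e1 (ng01 l k f) = ng01 mu k (e0 f)
    ∧ e0 (ng10 l a k g) = ng10 mu b k (e1 g)

/-- `Ω_NS(λ,α) ≅ Ω_NS(μ,β)` as `NS`-modules iff `λ = μ` and `α = β`. -/
theorem ns_iso_iff (l mu a b : ℂ) (hl : l ≠ 0) (hmu : mu ≠ 0) :
    NSModIso l a mu b ↔ l = mu ∧ a = b := by
  constructor
  · rintro ⟨e0, e1, h⟩
    -- e0 commutes with multiplication by X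
    have h0 : ∀ f : Polynomial ℂ, e0 (X * f) = X * e0 f := by
      intro f
      have := (h 0 0 f 0).1
      simpa [l0] using this
    have hpow : ∀ n : ℕ, e0 (X ^ n) = X ^ n * e0 1 := by
      intro n
      induction n with
      | zero => simp
      | succ n ih =>
        have : e0 (X * X ^ n) = X * e0 (X ^ n) := h0 _
        rw [ih] at this
        calc e0 (X ^ (n + 1)) = e0 (X * X ^ n) := by ring_nf
          _ = X * (X ^ n * e0 1) := this
          _ = X ^ (n + 1) * e0 1 := by ring
    have hmul : ∀ f : Polynomial ℂ, e0 f = f * e0 1 := by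
      intro f
      induction f using Polynomial.induction_on' with
      | add p q hp hq => rw [map_add, hp, hq, add_mul]
      | monomial n c =>
        rw [← Polynomial.C_mul_X_pow_eq_monomial, Polynomial.C_mul', map_smul, hpow,
          smul_mul_assoc]
    -- e0 1 is a unit, hence a nonzero constant
    obtain ⟨f, hf⟩ := e0.surjective 1
    have hunit : IsUnit (e0 1) := IsUnit.of_mul_eq_one f (by rw [mul_comm, ← hmul f, hf])
    obtain ⟨c, hc, hce⟩ := Polynomial.isUnit_iff.mp hunit
    have hc0 : c ≠ 0 := hc.ne_zero
    -- intertwining forces equality of the operators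
    have key : ∀ (m : ℤ) (f : Polynomial ℂ), l0 l a m f = l0 mu b m f := by
      intro m f
      have := (h m 0 f 0).1
      rw [hmul (l0 l a m f), hmul f, ← hce] at this
      have hrhs : l0 mu b m (f * C c) = l0 mu b m f * C c := by
        simp only [l0, Polynomial.mul_comp, Polynomial.C_comp, smul_mul_assoc]
        ring_nf
      rw [hrhs] at this
      exact mul_right_cancel₀ (by simpa using hc0) this
    have key1 := key 1 1
    simp only [l0, Int.cast_one, one_mul, Polynomial.one_comp, mul_one, zpow_one] at key1
    have hcoeff1 := congrArg (fun p => Polynomial.coeff p 1) key1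
    have hcoeff0 := congrArg (fun p => Polynomial.coeff p 0) key1
    simp only [Polynomial.coeff_smul, Polynomial.coeff_add, Polynomial.coeff_X_one,
      Polynomial.coeff_X_zero, Polynomial.coeff_C, smul_eq_mul] at hcoeff1 hcoeff0
    norm_num at hcoeff1 hcoeff0
    refine ⟨hcoeff1, ?_⟩
    rw [hcoeff1] at hcoeff0
    exact mul_left_cancel₀ hmu hcoeff0
  · rintro ⟨rfl, rfl⟩
    exact ⟨LinearEquiv.refl ℂ _, LinearEquiv.refl ℂ _, by simp⟩
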